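/- Let C be a Cauchy complete category and let (C, D) be a display map category which models Σ-types, Id-types, and Π-types. Then (C, D̄) models Π-types: for every pair of composable morphisms g : W → X and f : X → Y in D̄ = (^⧄D)^⧄ there exists a morphism Π_f g in D̄ with codomain Y and a bijection (C/Y)(y, Π_f g) ≅ (C/X)(f*y, g) natural in y ∈ C/Y. -/

import Mathlib

open CategoryTheory Limits

universe v u

namespace DMCPaper

variable {C : Type u} [Category.{v} C]

/-- The class of morphisms with the left lifting property against every morphism of `M`. -/
def Llp (M : MorphismProperty C) : MorphismProperty C :=
  fun _ _ f => ∀ ⦃U V : C⦄ (g : U ⟶ V), M g → HasLiftingProperty f g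

/-- The class of morphisms with the right lifting property against every morphism of `M`. -/
def Rlp (M : MorphismProperty C) : MorphismProperty C :=
  fun _ _ f => ∀ ⦃U V : C⦄ (g : U ⟶ V), M g → HasLiftingProperty g f

/-- `D̄ = (^⧄D)^⧄`. -/
def Bar (D : MorphismProperty C) : MorphismProperty C := Rlp (Llp D)

/-- `(C, D)` is a display map category. -/
structure IsDisplayMapCategory (D : MorphismProperty C) : Prop where
  hasTerminal : HasTerminal C
  mem_of_isIso : ∀ ⦃X Y : C⦄ (f : X ⟶ Y), IsIso f → D f
  mem_of_isTerminal : ∀ ⦃X Y : C⦄ (f : X ⟶ Y), IsTerminal Y → D f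
  hasPullback : ∀ ⦃X Y A : C⦄ (d : X ⟶ Y) (α : A ⟶ Y), D d → HasPullback α d
  stable : ∀ ⦃P A X Y : C⦄ (h : P ⟶ A) (k : P ⟶ X) (α : A ⟶ Y) (d : X ⟶ Y),
      IsPullback h k α d → D d → D h

/-- `(C, D)` models `Σ`-types: `D` is closed under composition. -/
def ModelsSigma (D : MorphismProperty C) : Prop :=
  ∀ ⦃X Y Z : C⦄ (f : X ⟶ Y) (g : Y ⟶ Z), D f → D g → D (f ≫ g)

/-- `(C, D)` models (Paulin-Mohring) `Id`-types. -/
def ModelsId (D : MorphismProperty C) : Prop :=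
  ∀ ⦃X Y : C⦄ (f : X ⟶ Y), D f →
    ∃ (P : C) (π₀ π₁ : P ⟶ X) (hP : IsPullback π₀ π₁ f f)
      (I : C) (r : X ⟶ I) (ε : I ⟶ P),
      r ≫ ε = hP.lift (𝟙 X) (𝟙 X) rfl ∧ D ε ∧
      ∀ (π : P ⟶ X), (π = π₀ ∨ π = π₁) →
        ∀ ⦃A : C⦄ (α : A ⟶ X) ⦃Q : C⦄ (p : Q ⟶ A) (q : Q ⟶ I),
          IsPullback p q α (ε ≫ π) →
          ∀ (l : A ⟶ Q), l ≫ p = 𝟙 A → l ≫ q = α ≫ r → Llp D l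

/-- Functorial `Id`-type structure on a display map category. -/
structure FunctorialIdData (D : MorphismProperty C) where
  P : ∀ ⦃X Y : C⦄ (f : X ⟶ Y), D f → C
  π₀ : ∀ ⦃X Y : C⦄ (f : X ⟶ Y) (hf : D f), P f hf ⟶ X
  π₁ : ∀ ⦃X Y : C⦄ (f : X ⟶ Y) (hf : D f), P f hf ⟶ X
  isPullback : ∀ ⦃X Y : C⦄ (f : X ⟶ Y) (hf : D f), IsPullback (π₀ f hf) (π₁ f hf) f f
  I : ∀ ⦃X Y : C⦄ (f : X ⟶ Y), D f → C
  r : ∀ ⦃X Y : C⦄ (f : X ⟶ Y) (hf : D f), X ⟶ I f hf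
  ε : ∀ ⦃X Y : C⦄ (f : X ⟶ Y) (hf : D f), I f hf ⟶ P f hf
  fact : ∀ ⦃X Y : C⦄ (f : X ⟶ Y) (hf : D f),
    r f hf ≫ ε f hf = (isPullback f hf).lift (𝟙 X) (𝟙 X) rfl
  ε_mem : ∀ ⦃X Y : C⦄ (f : X ⟶ Y) (hf : D f), D (ε f hf)
  lp : ∀ ⦃X Y : C⦄ (f : X ⟶ Y) (hf : D f) (π : P f hf ⟶ X),
    (π = π₀ f hf ∨ π = π₁ f hf) →
    ∀ ⦃A : C⦄ (α : A ⟶ X) ⦃Q : C⦄ (p : Q ⟶ A) (q : Q ⟶ I f hf),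
      IsPullback p q α (ε f hf ≫ π) →
      ∀ (l : A ⟶ Q), l ≫ p = 𝟙 A → l ≫ q = α ≫ r f hf → Llp D l
  map : ∀ ⦃Y X X' : C⦄ (f : X ⟶ Y) (f' : X' ⟶ Y) (hf : D f) (hf' : D f')
    (u : X ⟶ X'), u ≫ f' = f → (I f hf ⟶ I f' hf')
  map_r : ∀ ⦃Y X X' : C⦄ (f : X ⟶ Y) (f' : X' ⟶ Y) (hf : D f) (hf' : D f')
    (u : X ⟶ X') (hu : u ≫ f' = f),
    r f hf ≫ map f f' hf hf' u hu = u ≫ r f' hf'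
  map_ε : ∀ ⦃Y X X' : C⦄ (f : X ⟶ Y) (f' : X' ⟶ Y) (hf : D f) (hf' : D f')
    (u : X ⟶ X') (hu : u ≫ f' = f),
    map f f' hf hf' u hu ≫ ε f' hf' =
      ε f hf ≫ (isPullback f' hf').lift (π₀ f hf ≫ u) (π₁ f hf ≫ u)
        (by rw [Category.assoc, Category.assoc, hu]; exact (isPullback f hf).w)
  map_id : ∀ ⦃X Y : C⦄ (f : X ⟶ Y) (hf : D f),
    map f f hf hf (𝟙 X) (Category.id_comp f) = 𝟙 (I f hf)
  map_comp : ∀ ⦃Y X X' X'' : C⦄ (f : X ⟶ Y) (f' : X' ⟶ Y) (f'' : X'' ⟶ Y)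
    (hf : D f) (hf' : D f') (hf'' : D f'')
    (u : X ⟶ X') (hu : u ≫ f' = f) (v : X' ⟶ X'') (hv : v ≫ f'' = f'),
    map f f'' hf hf'' (u ≫ v) (by rw [Category.assoc, hv, hu]) =
      map f f' hf hf' u hu ≫ map f' f'' hf' hf'' v hv

/-- `(C, D)` models functorial `Id`-types. -/
def ModelsFunctorialId (D : MorphismProperty C) : Prop :=
  Nonempty (FunctorialIdData D)

/-- `(C, D)` models `Π`-types. -/
def ModelsPi (D : MorphismProperty C) : Prop :=
  ∀ ⦃W X Y : C⦄ (g : W ⟶ X) (f : X ⟶ Y), D g → D f →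
    ∃ (PI : C) (pf : PI ⟶ Y), D pf ∧
      ∃ φ : ∀ ⦃A Q : C⦄ (y : A ⟶ Y) (a : Q ⟶ A) (q : Q ⟶ X),
          IsPullback a q y f →
          ({u : A ⟶ PI // u ≫ pf = y} ≃ {v : Q ⟶ W // v ≫ g = q}),
        ∀ ⦃A A' Q Q' : C⦄ (y : A ⟶ Y) (y' : A' ⟶ Y) (t : A ⟶ A') (ht : t ≫ y' = y)
          (a : Q ⟶ A) (q : Q ⟶ X) (hQ : IsPullback a q y f)
          (a' : Q' ⟶ A') (q' : Q' ⟶ X) (hQ' : IsPullback a' q' y' f)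
          (s : Q ⟶ Q'), s ≫ a' = a ≫ t → s ≫ q' = q →
          ∀ (u' : A' ⟶ PI) (hu' : u' ≫ pf = y'),
            (φ y a q hQ ⟨t ≫ u', by rw [Category.assoc, hu', ht]⟩).1 =
              s ≫ (φ y' a' q' hQ' ⟨u', hu'⟩).1

/-- `(L, R)` is a weak factorization system on `C`. -/
def IsWFS (L R : MorphismProperty C) : Prop :=
  (∀ ⦃X Y : C⦄ (f : X ⟶ Y), ∃ (Z : C) (l : X ⟶ Z) (ρ : Z ⟶ Y), L l ∧ R ρ ∧ l ≫ ρ = f)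
  ∧ L = Llp R ∧ R = Rlp L

/-- `f` is a retract of `g` in the arrow category `C^2`. -/
def IsRetractOf {X Y U V : C} (f : X ⟶ Y) (g : U ⟶ V) : Prop :=
  ∃ (iX : X ⟶ U) (iY : Y ⟶ V) (rX : U ⟶ X) (rY : V ⟶ Y),
    iX ≫ g = f ≫ iY ∧ rX ≫ f = g ≫ rY ∧ iX ≫ rX = 𝟙 X ∧ iY ≫ rY = 𝟙 Y

/-- `(C, D)` models the formation and introduction rules of `Id`-types. -/
def ModelsFormIntro (D : MorphismProperty C) : Prop :=
  ∀ ⦃A Γ : C⦄ (d : A ⟶ Γ), D d →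
    ∃ (P : C) (π₀ π₁ : P ⟶ A) (hP : IsPullback π₀ π₁ d d)
      (I : C) (r : A ⟶ I) (ε : I ⟶ P),
      r ≫ ε = hP.lift (𝟙 A) (𝟙 A) rfl ∧ D ε

/-- `(C, D)` models Paulin-Mohring `Id`-types. -/
def ModelsPaulinMohringId (D : MorphismProperty C) : Prop :=
  ∀ ⦃A Γ : C⦄ (d : A ⟶ Γ), D d →
    ∃ (P : C) (π₀ π₁ : P ⟶ A) (hP : IsPullback π₀ π₁ d d)
      (I : C) (r : A ⟶ I) (ε : I ⟶ P),
      r ≫ ε = hP.lift (𝟙 A) (𝟙 A) rfl ∧ D ε ∧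
      ∀ (π : P ⟶ A), (π = π₀ ∨ π = π₁) →
        ∀ ⦃Δ : C⦄ (σ : Δ ⟶ A) ⦃Q : C⦄ (p : Q ⟶ Δ) (q : Q ⟶ I),
          IsPullback p q σ (ε ≫ π) →
          ∀ (l : Δ ⟶ Q), l ≫ p = 𝟙 Δ → l ≫ q = σ ≫ r → Llp D l

/-- `(C, D)` models parametrized Martin-Löf `Id`-types (which includes the
plain Martin-Löf elimination). -/
def ModelsParamMLId (D : MorphismProperty C) : Prop :=
  ∀ ⦃A Γ : C⦄ (d : A ⟶ Γ), D d →
    ∃ (P : C) (π₀ π₁ : P ⟶ A) (hP : IsPullback π₀ π₁ d d)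
      (I : C) (r : A ⟶ I) (ε : I ⟶ P),
      r ≫ ε = hP.lift (𝟙 A) (𝟙 A) rfl ∧ D ε ∧
      ∀ ⦃Δ : C⦄ (σ : Δ ⟶ Γ)
        ⦃A₀ : C⦄ (pA : A₀ ⟶ Δ) (qA : A₀ ⟶ A), IsPullback pA qA σ d →
        ∀ ⦃Q : C⦄ (pI : Q ⟶ Δ) (qI : Q ⟶ I), IsPullback pI qI σ (ε ≫ π₀ ≫ d) →
        ∀ (m : A₀ ⟶ Q), m ≫ pI = pA → m ≫ qI = qA ≫ r →
          Llp D m ∧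
          ∀ ⦃Θ : C⦄ (θ : Θ ⟶ Q), D θ →
            ∀ ⦃E : C⦄ (e₁ : E ⟶ Θ) (e₂ : E ⟶ A₀), IsPullback e₁ e₂ θ m → Llp D e₁

/-- `^⧄D` is stable under pullback along morphisms of `D`. -/
def LlpStableUnderPullbackAlongD (D : MorphismProperty C) : Prop :=
  ∀ ⦃P A X Y : C⦄ (h : P ⟶ A) (k : P ⟶ X) (d : A ⟶ Y) (l : X ⟶ Y),
    IsPullback h k d l → D d → Llp D l → Llp D h



lemma bar_factor (D : MorphismProperty C) (hDMC : IsDisplayMapCategory D)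
    (hSigma : ModelsSigma D) (hId : ModelsId D) {X Y : C} (f : X ⟶ Y) (hf : Bar D f) :
    ∃ (X₁ : C) (l : X ⟶ X₁) (f₁ : X₁ ⟶ Y) (s : X₁ ⟶ X),
      D f₁ ∧ l ≫ f₁ = f ∧ l ≫ s = 𝟙 X ∧ s ≫ f = f₁ := by
  haveI := hDMC.hasTerminal
  obtain ⟨tY, htY⟩ : ∃ t : Y ⟶ ⊤_ C, t = terminal.from Y := ⟨_, rfl⟩
  have hDtY : D tY := hDMC.mem_of_isTerminal _ terminalIsTerminal
  obtain ⟨P, π₀, π₁, hP, I, r, ε, hre, hε, hlp⟩ := hId tY hDtY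
  have hπ₀ : D π₀ := hDMC.stable π₀ π₁ tY tY hP hDtY
  have hεπ₀ : D (ε ≫ π₀) := hSigma ε π₀ hε hπ₀
  have hreπ₀ : r ≫ ε ≫ π₀ = 𝟙 Y := by
    rw [← Category.assoc, hre, hP.lift_fst]
  have hreπ₁ : r ≫ ε ≫ π₁ = 𝟙 Y := by
    rw [← Category.assoc, hre, hP.lift_snd]
  haveI : HasPullback f (ε ≫ π₀) := hDMC.hasPullback (ε ≫ π₀) f hεπ₀
  obtain ⟨fstM, hfstM⟩ : ∃ x : pullback f (ε ≫ π₀) ⟶ X, x = pullback.fst f (ε ≫ π₀) := ⟨_, rfl⟩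
  obtain ⟨sndM, hsndM⟩ : ∃ x : pullback f (ε ≫ π₀) ⟶ I, x = pullback.snd f (ε ≫ π₀) := ⟨_, rfl⟩
  have hMsq : fstM ≫ f = sndM ≫ ε ≫ π₀ := by rw [hfstM, hsndM]; exact pullback.condition
  have hlw : 𝟙 X ≫ f = (f ≫ r) ≫ ε ≫ π₀ := by
    rw [Category.id_comp, Category.assoc, hreπ₀, Category.comp_id]
  obtain ⟨l, hl⟩ : ∃ x : X ⟶ pullback f (ε ≫ π₀), x = pullback.lift (𝟙 X) (f ≫ r) hlw := ⟨_, rfl⟩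
  have hlfst : l ≫ fstM = 𝟙 X := by rw [hl, hfstM]; exact pullback.lift_fst _ _ _
  have hlsnd : l ≫ sndM = f ≫ r := by rw [hl, hsndM]; exact pullback.lift_snd _ _ _
  -- N := X × Y
  obtain ⟨tX, htX⟩ : ∃ t : X ⟶ ⊤_ C, t = terminal.from X := ⟨_, rfl⟩
  have hDtX : D tX := hDMC.mem_of_isTerminal _ terminalIsTerminal
  haveI : HasPullback tY tX := hDMC.hasPullback tX tY hDtX
  obtain ⟨pNY, hpNY⟩ : ∃ x : pullback tY tX ⟶ Y, x = pullback.fst tY tX := ⟨_, rfl⟩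
  obtain ⟨pNX, hpNX⟩ : ∃ x : pullback tY tX ⟶ X, x = pullback.snd tY tX := ⟨_, rfl⟩
  have hDpNY : D pNY :=
    hDMC.stable pNY pNX tY tX (by rw [hpNY, hpNX]; exact IsPullback.of_hasPullback tY tX) hDtX
  obtain ⟨fxid, hfxid⟩ : ∃ x : pullback tY tX ⟶ P,
      x = hP.lift (pNX ≫ f) pNY (terminal.hom_ext _ _) := ⟨_, rfl⟩
  have hfπ0 : fxid ≫ π₀ = pNX ≫ f := by rw [hfxid]; exact hP.lift_fst _ _ _
  have hfπ1 : fxid ≫ π₁ = pNY := by rw [hfxid]; exact hP.lift_snd _ _ _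
  obtain ⟨u, hu⟩ : ∃ x : pullback f (ε ≫ π₀) ⟶ pullback tY tX,
      x = pullback.lift (sndM ≫ ε ≫ π₁) fstM (terminal.hom_ext _ _) := ⟨_, rfl⟩
  have hufst : u ≫ pNY = sndM ≫ ε ≫ π₁ := by rw [hu, hpNY]; exact pullback.lift_fst _ _ _
  have husnd : u ≫ pNX = fstM := by rw [hu, hpNX]; exact pullback.lift_snd _ _ _
  have hcomm : u ≫ fxid = sndM ≫ ε := by
    apply hP.hom_ext
    · rw [Category.assoc, hfπ0, ← Category.assoc, husnd, hMsq, Category.assoc]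
    · rw [Category.assoc, hfπ1, hufst, Category.assoc]
  have hupb : IsPullback u sndM fxid ε := by
    refine IsPullback.of_isLimit (PullbackCone.IsLimit.mk hcomm
      (fun s => pullback.lift (s.fst ≫ pNX) s.snd ?_) (fun s => ?_) (fun s => ?_)
      (fun s m h₁ h₂ => ?_))
    · rw [Category.assoc, ← hfπ0, ← Category.assoc, s.condition, Category.assoc]
    · apply pullback.hom_ext
      · rw [← hpNY, Category.assoc, hufst, ← Category.assoc]
        beta_reduce
        rw [hsndM, pullback.lift_snd, ← hfπ1, ← Category.assoc, ← Category.assoc, s.condition]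
      · rw [← hpNX, Category.assoc, husnd]
        beta_reduce
        rw [hfstM, pullback.lift_fst]
    · beta_reduce
      rw [hsndM, pullback.lift_snd]
    · apply pullback.hom_ext
      · beta_reduce
        rw [pullback.lift_fst, ← h₁, Category.assoc, husnd, hfstM]
      · beta_reduce
        rw [pullback.lift_snd, ← h₂, hsndM]
  have hDu : D u := hDMC.stable u sndM fxid ε hupb hε
  have hDf₁ : D (u ≫ pNY) := hSigma u pNY hDu hDpNY
  have hlf₁ : l ≫ u ≫ pNY = f := by
    rw [hufst, ← Category.assoc, hlsnd, Category.assoc, hreπ₁, Category.comp_id]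
  have hLlpl : Llp D l := by
    refine hlp π₀ (Or.inl rfl) f fstM sndM
      (by rw [hfstM, hsndM]; exact IsPullback.of_hasPullback f (ε ≫ π₀)) l hlfst hlsnd
  haveI : HasLiftingProperty l f := hf l hLlpl
  have sq : CommSq (𝟙 X) l f (u ≫ pNY) := ⟨by rw [Category.id_comp, hlf₁]⟩
  exact ⟨pullback f (ε ≫ π₀), l, u ≫ pNY, sq.lift, hDf₁, hlf₁, sq.fac_left, sq.fac_right⟩

/-- if `C` is Cauchy complete and `(C, D)` models `Σ`-, `Id`-, and
`Π`-types, then `(C, D̄)` models `Π`-types. -/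
theorem statement_14 (hC : IsIdempotentComplete C) (D : MorphismProperty C)
    (hDMC : IsDisplayMapCategory D) (hSigma : ModelsSigma D) (hId : ModelsId D)
    (hPi : ModelsPi D) :
    ModelsPi (Bar D) := by
  intro W X Y g f hg hf
  obtain ⟨W₁, mg, g₁, sg, hDg₁, hmgg₁, hmgsg, hsgg⟩ := bar_factor D hDMC hSigma hId g hg
  obtain ⟨X₁, lf, f₁, sf, hDf₁, hlff₁, hlfsf, hsff⟩ := bar_factor D hDMC hSigma hId f hf
  -- W₂ := pullback of g₁ along sf
  haveI : HasPullback sf g₁ := hDMC.hasPullback g₁ sf hDg₁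
  obtain ⟨g₂, hg₂⟩ : ∃ x : pullback sf g₁ ⟶ X₁, x = pullback.fst sf g₁ := ⟨_, rfl⟩
  obtain ⟨tW, htW⟩ : ∃ x : pullback sf g₁ ⟶ W₁, x = pullback.snd sf g₁ := ⟨_, rfl⟩
  have hW₂ : IsPullback g₂ tW sf g₁ := by
    rw [hg₂, htW]; exact IsPullback.of_hasPullback _ _
  have hDg₂ : D g₂ := hDMC.stable g₂ tW sf g₁ hW₂ hDg₁
  obtain ⟨Pi', pf', hDpf', φ, hφ⟩ := hPi g₂ f₁ hDg₂ hDf₁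
  -- chosen pullback of pf' along f₁
  haveI : HasPullback pf' f₁ := hDMC.hasPullback f₁ pf' hDf₁
  have hQb : IsPullback (pullback.fst pf' f₁) (pullback.snd pf' f₁) pf' f₁ :=
    IsPullback.of_hasPullback _ _
  -- the canonical idempotent e on Pi'
  have hw0mem : (𝟙 Pi') ≫ pf' = pf' := Category.id_comp _
  obtain ⟨w₀, hw₀⟩ : ∃ x : pullback pf' f₁ ⟶ pullback sf g₁,
      x = (φ pf' _ _ hQb ⟨𝟙 Pi', hw0mem⟩).1 := ⟨_, rfl⟩
  have hw₀g₂ : w₀ ≫ g₂ = pullback.snd pf' f₁ := by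
    rw [hw₀]; exact (φ pf' _ _ hQb ⟨𝟙 Pi', hw0mem⟩).2
  -- the idempotent eQ on a pullback of y along f₁
  have heQw : ∀ {A Q₁ : C} (y : A ⟶ Y) (a₁ : Q₁ ⟶ A) (q₁ : Q₁ ⟶ X₁)
      (hQ₁ : IsPullback a₁ q₁ y f₁), a₁ ≫ y = (q₁ ≫ sf ≫ lf) ≫ f₁ := by
    intro A Q₁ y a₁ q₁ hQ₁
    simp only [Category.assoc]; rw [hlff₁, hsff]; exact hQ₁.w
  obtain ⟨eQb, heQb⟩ : ∃ x : pullback pf' f₁ ⟶ pullback pf' f₁,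
      x = hQb.lift (pullback.fst pf' f₁) (pullback.snd pf' f₁ ≫ sf ≫ lf)
        (heQw pf' _ _ hQb) := ⟨_, rfl⟩
  have heQb_fst : eQb ≫ pullback.fst pf' f₁ = pullback.fst pf' f₁ := by
    rw [heQb]; exact hQb.lift_fst _ _ _
  have heQb_snd : eQb ≫ pullback.snd pf' f₁ = pullback.snd pf' f₁ ≫ sf ≫ lf := by
    rw [heQb]; exact hQb.lift_snd _ _ _
  -- E₀, the transformed w₀
  have hE₀w : pullback.snd pf' f₁ ≫ sf = (eQb ≫ w₀ ≫ tW ≫ sg ≫ mg) ≫ g₁ := by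
    simp only [Category.assoc]
    rw [hmgg₁, hsgg, ← hW₂.w, reassoc_of% hw₀g₂, reassoc_of% heQb_snd,
      hlfsf, Category.comp_id]
  obtain ⟨E₀, hE₀⟩ : ∃ x : pullback pf' f₁ ⟶ pullback sf g₁,
      x = hW₂.lift (pullback.snd pf' f₁) (eQb ≫ w₀ ≫ tW ≫ sg ≫ mg) hE₀w := ⟨_, rfl⟩
  have hE₀g₂ : E₀ ≫ g₂ = pullback.snd pf' f₁ := by rw [hE₀]; exact hW₂.lift_fst _ _ _
  have hE₀tW : E₀ ≫ tW = eQb ≫ w₀ ≫ tW ≫ sg ≫ mg := by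
    rw [hE₀]; exact hW₂.lift_snd _ _ _
  obtain ⟨e, hed⟩ : ∃ x : Pi' ⟶ Pi',
      x = ((φ pf' _ _ hQb).symm ⟨E₀, hE₀g₂⟩).1 := ⟨_, rfl⟩
  have he : e ≫ pf' = pf' := by rw [hed]; exact ((φ pf' _ _ hQb).symm ⟨E₀, hE₀g₂⟩).2
  have hφe : ∀ (p : e ≫ pf' = pf'), (φ pf' _ _ hQb ⟨e, p⟩).1 = E₀ := by
    intro p
    have : (⟨e, p⟩ : {u : Pi' ⟶ Pi' // u ≫ pf' = pf'}) = (φ pf' _ _ hQb).symm ⟨E₀, hE₀g₂⟩ :=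
      Subtype.ext hed
    rw [this, Equiv.apply_symm_apply]
  -- Lemma N
  have lemN : ∀ {A Q₁ : C} (y : A ⟶ Y) (a₁ : Q₁ ⟶ A) (q₁ : Q₁ ⟶ X₁)
      (hQ₁ : IsPullback a₁ q₁ y f₁) (u : A ⟶ Pi') (hu : u ≫ pf' = y)
      (hue : (u ≫ e) ≫ pf' = y),
      (φ y a₁ q₁ hQ₁ ⟨u ≫ e, hue⟩).1 ≫ tW =
        hQ₁.lift a₁ (q₁ ≫ sf ≫ lf) (heQw y a₁ q₁ hQ₁) ≫
          (φ y a₁ q₁ hQ₁ ⟨u, hu⟩).1 ≫ tW ≫ sg ≫ mg := by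
    intro A Q₁ y a₁ q₁ hQ₁ u hu hue
    have hs₀w : (a₁ ≫ u) ≫ pf' = q₁ ≫ f₁ := by
      rw [Category.assoc, hu]; exact hQ₁.w
    have h1 : (φ y a₁ q₁ hQ₁ ⟨u ≫ e, hue⟩).1 =
        hQb.lift (a₁ ≫ u) q₁ hs₀w ≫ (φ pf' _ _ hQb ⟨e, he⟩).1 := by
      have := hφ y pf' u hu a₁ q₁ hQ₁ (pullback.fst pf' f₁) (pullback.snd pf' f₁) hQb
        (hQb.lift (a₁ ≫ u) q₁ hs₀w) (hQb.lift_fst _ _ _) (hQb.lift_snd _ _ _) e he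
      exact this
    have h2 : (φ y a₁ q₁ hQ₁ ⟨u, hu⟩).1 = hQb.lift (a₁ ≫ u) q₁ hs₀w ≫ w₀ := by
      have h3 := hφ y pf' u hu a₁ q₁ hQ₁ (pullback.fst pf' f₁) (pullback.snd pf' f₁) hQb
        (hQb.lift (a₁ ≫ u) q₁ hs₀w) (hQb.lift_fst _ _ _) (hQb.lift_snd _ _ _) (𝟙 Pi') hw0mem
      rw [← hw₀] at h3
      have h4 : (⟨u ≫ 𝟙 Pi', by rw [Category.assoc, hw0mem, hu]⟩ :
          {x : A ⟶ Pi' // x ≫ pf' = y}) = ⟨u, hu⟩ := Subtype.ext (Category.comp_id u)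
      rw [h4] at h3
      exact h3
    have hcomm : hQb.lift (a₁ ≫ u) q₁ hs₀w ≫ eQb =
        hQ₁.lift a₁ (q₁ ≫ sf ≫ lf) (heQw y a₁ q₁ hQ₁) ≫ hQb.lift (a₁ ≫ u) q₁ hs₀w := by
      apply hQb.hom_ext
      · have t2 := hQb.lift_fst (a₁ ≫ u) q₁ hs₀w
        have t3 := hQ₁.lift_fst a₁ (q₁ ≫ sf ≫ lf) (heQw y a₁ q₁ hQ₁)
        rw [Category.assoc, heQb_fst, t2, Category.assoc, t2, reassoc_of% t3]
      · rw [Category.assoc, heQb_snd, reassoc_of% (hQb.lift_snd (a₁ ≫ u) q₁ hs₀w),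
          Category.assoc, hQb.lift_snd, hQ₁.lift_snd]
    rw [h1, hφe he, Category.assoc, hE₀tW, h2]
    rw [reassoc_of% hcomm]
    simp only [Category.assoc]
  -- e is idempotent
  have hee : (e ≫ e) ≫ pf' = pf' := by rw [Category.assoc, he, he]
  have heQb2 : eQb ≫ eQb = eQb := by
    apply hQb.hom_ext
    · rw [Category.assoc, heQb_fst, heQb_fst]
    · rw [Category.assoc, heQb_snd, reassoc_of% heQb_snd,
        ← Category.assoc lf sf lf, hlfsf, Category.id_comp]
  have h5 := lemN pf' (pullback.fst pf' f₁) (pullback.snd pf' f₁) hQb e he hee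
  rw [← heQb, hφe he] at h5
  have h6 : eQb ≫ E₀ ≫ tW ≫ sg ≫ mg = E₀ ≫ tW := by
    rw [reassoc_of% hE₀tW, reassoc_of% heQb2, ← Category.assoc mg sg mg, hmgsg,
      Category.id_comp, hE₀tW]
  rw [h6, ← hφe he] at h5
  have h8 : (φ pf' _ _ hQb ⟨e ≫ e, hee⟩).1 = (φ pf' _ _ hQb ⟨e, he⟩).1 := by
    apply hW₂.hom_ext
    · rw [(φ pf' _ _ hQb ⟨e ≫ e, hee⟩).2, (φ pf' _ _ hQb ⟨e, he⟩).2]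
    · exact h5
  have he2 : e ≫ e = e :=
    congrArg Subtype.val ((φ pf' _ _ hQb).injective (Subtype.ext h8))
  -- split the idempotent
  obtain ⟨PI, ι, ρ, hιρ, hρι⟩ := hC.idempotents_split Pi' e he2
  -- pf := ι ≫ pf' is in Bar D
  have hbar : Bar D (ι ≫ pf') := by
    intro U V lm hlm
    haveI : HasLiftingProperty lm pf' := hlm pf' hDpf'
    constructor
    intro ftop gbot sq
    have sq' : CommSq (ftop ≫ ι) lm pf' gbot := ⟨by rw [Category.assoc]; exact sq.w⟩
    exact ⟨⟨⟨sq'.lift ≫ ρ,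
      by rw [← Category.assoc, sq'.fac_left, Category.assoc, hιρ, Category.comp_id],
      by simp only [Category.assoc]; rw [reassoc_of% hρι, he]; exact sq'.fac_right⟩⟩⟩
  -- instance provider for pullbacks of y along f₁
  have hPB : ∀ {A : C} (y : A ⟶ Y), HasPullback y f₁ := fun y => hDMC.hasPullback f₁ y hDf₁
  refine ⟨PI, ι ≫ pf', hbar, ?_⟩
  have memι : ∀ {A : C} {y : A ⟶ Y} (u : {u : A ⟶ PI // u ≫ ι ≫ pf' = y}),
      (u.1 ≫ ι) ≫ pf' = y := by
    intro A y u; rw [Category.assoc]; exact u.2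
  have pfj : ∀ {A Q : C} (y : A ⟶ Y) (a : Q ⟶ A) (q : Q ⟶ X), IsPullback a q y f →
      a ≫ y = (q ≫ lf) ≫ f₁ := by
    intro A Q y a q hQ; rw [Category.assoc, hlff₁]; exact hQ.w
  have pfk : ∀ {A Q₁ : C} (y : A ⟶ Y) (a₁ : Q₁ ⟶ A) (q₁ : Q₁ ⟶ X₁),
      IsPullback a₁ q₁ y f₁ → a₁ ≫ y = (q₁ ≫ sf) ≫ f := by
    intro A Q₁ y a₁ q₁ hQ₁; rw [Category.assoc, hsff]; exact hQ₁.w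
  have memT : ∀ {A Q Q₁ : C} (y : A ⟶ Y) (a : Q ⟶ A) (q : Q ⟶ X), IsPullback a q y f →
      ∀ (a₁ : Q₁ ⟶ A) (q₁ : Q₁ ⟶ X₁), IsPullback a₁ q₁ y f₁ →
      ∀ (w : Q₁ ⟶ pullback sf g₁), w ≫ g₂ = q₁ →
      ∀ (j : Q ⟶ Q₁), j ≫ q₁ = q ≫ lf →
      (j ≫ w ≫ tW ≫ sg) ≫ g = q := by
    intro A Q Q₁ y a q hQ a₁ q₁ hQ₁ w hw j hj
    simp only [Category.assoc]
    rw [hsgg, ← hW₂.w, reassoc_of% hw, ← Category.assoc, hj, Category.assoc, hlfsf,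
      Category.comp_id]
  have pfw : ∀ {A Q Q₁ : C} (y : A ⟶ Y) (a : Q ⟶ A) (q : Q ⟶ X), IsPullback a q y f →
      ∀ (a₁ : Q₁ ⟶ A) (q₁ : Q₁ ⟶ X₁), IsPullback a₁ q₁ y f₁ →
      ∀ (k : Q₁ ⟶ Q), k ≫ q = q₁ ≫ sf →
      ∀ (v : Q ⟶ W), v ≫ g = q → q₁ ≫ sf = (k ≫ v ≫ mg) ≫ g₁ := by
    intro A Q Q₁ y a q hQ a₁ q₁ hQ₁ k hk v hv
    simp only [Category.assoc]
    rw [hmgg₁, hv, hk]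
  have memI : ∀ {A : C} (y : A ⟶ Y) (u : A ⟶ Pi'), u ≫ pf' = y →
      (u ≫ ρ) ≫ ι ≫ pf' = y := by
    intro A y u hu
    simp only [Category.assoc]
    rw [reassoc_of% hρι, he, hu]
  refine ⟨fun {A Q} y a q hQ =>
    letI : HasPullback y f₁ := hPB y
    { toFun := fun u =>
        ⟨pullback.lift a (q ≫ lf) (pfj y a q hQ) ≫
            (φ y (pullback.fst y f₁) (pullback.snd y f₁) (IsPullback.of_hasPullback y f₁)
              ⟨u.1 ≫ ι, memι u⟩).1 ≫ tW ≫ sg,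
          memT y a q hQ _ _ (IsPullback.of_hasPullback y f₁) _
            (φ y (pullback.fst y f₁) (pullback.snd y f₁) (IsPullback.of_hasPullback y f₁)
              ⟨u.1 ≫ ι, memι u⟩).2 _ (pullback.lift_snd _ _ _)⟩,
      invFun := fun v =>
        ⟨((φ y (pullback.fst y f₁) (pullback.snd y f₁)
              (IsPullback.of_hasPullback y f₁)).symm
            ⟨hW₂.lift (pullback.snd y f₁)
                (hQ.lift (pullback.fst y f₁) (pullback.snd y f₁ ≫ sf)
                    (pfk y _ _ (IsPullback.of_hasPullback y f₁)) ≫ v.1 ≫ mg)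
                (pfw y a q hQ _ _ (IsPullback.of_hasPullback y f₁) _
                  (hQ.lift_snd _ _ _) v.1 v.2),
              hW₂.lift_fst _ _ _⟩).1 ≫ ρ,
          memI y _
            (((φ y (pullback.fst y f₁) (pullback.snd y f₁)
                (IsPullback.of_hasPullback y f₁)).symm
              ⟨hW₂.lift (pullback.snd y f₁)
                  (hQ.lift (pullback.fst y f₁) (pullback.snd y f₁ ≫ sf)
                      (pfk y _ _ (IsPullback.of_hasPullback y f₁)) ≫ v.1 ≫ mg)
                  (pfw y a q hQ _ _ (IsPullback.of_hasPullback y f₁) _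
                    (hQ.lift_snd _ _ _) v.1 v.2),
                hW₂.lift_fst _ _ _⟩).2)⟩,
      left_inv := by
        intro u
        apply Subtype.ext
        dsimp only
        set Φ := φ y (pullback.fst y f₁) (pullback.snd y f₁)
          (IsPullback.of_hasPullback y f₁) with hΦ
        set J := pullback.lift a (q ≫ lf) (pfj y a q hQ) with hJdef
        set K := hQ.lift (pullback.fst y f₁) (pullback.snd y f₁ ≫ sf)
          (pfk y _ _ (IsPullback.of_hasPullback y f₁)) with hKdef
        have hkj : K ≫ J = (IsPullback.of_hasPullback y f₁).lift (pullback.fst y f₁)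
            (pullback.snd y f₁ ≫ sf ≫ lf)
            (heQw y _ _ (IsPullback.of_hasPullback y f₁)) := by
          apply pullback.hom_ext
          · rw [Category.assoc, hJdef, pullback.lift_fst, hKdef, hQ.lift_fst,
              IsPullback.lift_fst]
          · rw [Category.assoc, hJdef, pullback.lift_snd, hKdef,
              reassoc_of% (hQ.lift_snd (pullback.fst y f₁) (pullback.snd y f₁ ≫ sf)
                (pfk y _ _ (IsPullback.of_hasPullback y f₁))), IsPullback.lift_snd]
        have pfe : ((u.1 ≫ ι) ≫ e) ≫ pf' = y := by
          rw [Category.assoc, he, Category.assoc]; exact u.2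
        have harg : ∀ (pw : pullback.snd y f₁ ≫ sf =
              (K ≫ (J ≫ (Φ ⟨u.1 ≫ ι, memι u⟩).1 ≫ tW ≫ sg) ≫ mg) ≫ g₁),
            hW₂.lift (pullback.snd y f₁)
                (K ≫ (J ≫ (Φ ⟨u.1 ≫ ι, memι u⟩).1 ≫ tW ≫ sg) ≫ mg) pw
              = (Φ ⟨(u.1 ≫ ι) ≫ e, pfe⟩).1 := by
          intro pw
          apply hW₂.hom_ext
          · rw [hW₂.lift_fst, (Φ ⟨(u.1 ≫ ι) ≫ e, pfe⟩).2]
          · rw [hW₂.lift_snd]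
            have hN := lemN y (pullback.fst y f₁) (pullback.snd y f₁)
              (IsPullback.of_hasPullback y f₁) (u.1 ≫ ι) (memι u) pfe
            rw [← hΦ] at hN
            rw [hN, ← hkj]
            simp only [Category.assoc]
        simp +zetaDelta only [harg]
        have hS : ∀ (p : (Φ ⟨(u.1 ≫ ι) ≫ e, pfe⟩).1 ≫ g₂ = pullback.snd y f₁),
            (⟨(Φ ⟨(u.1 ≫ ι) ≫ e, pfe⟩).1, p⟩ :
              {v : pullback y f₁ ⟶ pullback sf g₁ // v ≫ g₂ = pullback.snd y f₁})
              = Φ ⟨(u.1 ≫ ι) ≫ e, pfe⟩ := fun p => Subtype.ext rfl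
        simp +zetaDelta only [hS]
        rw [Equiv.symm_apply_apply]
        show ((u.1 ≫ ι) ≫ e) ≫ ρ = u.1
        have h11 : (u.1 ≫ ι) ≫ e = u.1 ≫ ι := by
          rw [Category.assoc, ← hρι, ← Category.assoc ι ρ ι, hιρ, Category.id_comp]
        rw [h11, Category.assoc, hιρ, Category.comp_id],
      right_inv := by
        intro v
        apply Subtype.ext
        dsimp only
        set Φ := φ y (pullback.fst y f₁) (pullback.snd y f₁)
          (IsPullback.of_hasPullback y f₁) with hΦ
        set J := pullback.lift a (q ≫ lf) (pfj y a q hQ) with hJdef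
        set K := hQ.lift (pullback.fst y f₁) (pullback.snd y f₁ ≫ sf)
          (pfk y _ _ (IsPullback.of_hasPullback y f₁)) with hKdef
        set Lv := hW₂.lift (pullback.snd y f₁) (K ≫ v.1 ≫ mg)
          (pfw y a q hQ _ _ (IsPullback.of_hasPullback y f₁) _
            (hQ.lift_snd _ _ _) v.1 v.2) with hLv
        set ub := (Φ.symm ⟨Lv, hW₂.lift_fst _ _ _⟩).1 with hub
        have hubpf : ub ≫ pf' = y := by
          rw [hub]; exact (Φ.symm ⟨Lv, hW₂.lift_fst _ _ _⟩).2
        have pfe2 : (ub ≫ e) ≫ pf' = y := by rw [Category.assoc, he]; exact hubpf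
        have h12 : ∀ (p : ((ub ≫ ρ) ≫ ι) ≫ pf' = y),
            (⟨(ub ≫ ρ) ≫ ι, p⟩ : {x : A ⟶ Pi' // x ≫ pf' = y}) = ⟨ub ≫ e, pfe2⟩ :=
          fun p => Subtype.ext (by simp only [Category.assoc, hρι])
        simp +zetaDelta only [h12]
        have hN := lemN y (pullback.fst y f₁) (pullback.snd y f₁)
          (IsPullback.of_hasPullback y f₁) ub hubpf pfe2
        rw [← hΦ] at hN
        rw [reassoc_of% hN]
        have h13 : (⟨ub, hubpf⟩ : {x : A ⟶ Pi' // x ≫ pf' = y})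
            = Φ.symm ⟨Lv, hW₂.lift_fst _ _ _⟩ := Subtype.ext hub
        rw [h13, Equiv.apply_symm_apply]
        dsimp only
        have hLtW : Lv ≫ tW = K ≫ v.1 ≫ mg := by rw [hLv]; exact hW₂.lift_snd _ _ _
        rw [reassoc_of% hLtW, hmgsg, Category.comp_id, hmgsg, Category.comp_id]
        have hje : J ≫ (IsPullback.of_hasPullback y f₁).lift (pullback.fst y f₁)
            (pullback.snd y f₁ ≫ sf ≫ lf)
            (heQw y _ _ (IsPullback.of_hasPullback y f₁)) = J := by
          apply pullback.hom_ext
          · rw [Category.assoc, IsPullback.lift_fst]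
          · rw [Category.assoc, IsPullback.lift_snd, hJdef,
              reassoc_of% (pullback.lift_snd a (q ≫ lf) (pfj y a q hQ)),
              pullback.lift_snd, ← Category.assoc lf sf lf, hlfsf, Category.id_comp]
        have hjk : J ≫ K = 𝟙 Q := by
          apply hQ.hom_ext
          · rw [Category.assoc, hKdef, hQ.lift_fst, hJdef, pullback.lift_fst,
              Category.id_comp]
          · rw [Category.assoc, hKdef, hQ.lift_snd, hJdef,
              reassoc_of% (pullback.lift_snd a (q ≫ lf) (pfj y a q hQ)), hlfsf,
              Category.comp_id, Category.id_comp]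
        rw [reassoc_of% hje, reassoc_of% hjk] }, ?_⟩
  intro A A' Q Q' y y' t ht a q hQ a' q' hQ' s hs1 hs2 u' hu'
  haveI := hPB y
  haveI := hPB y'
  dsimp only
  simp only [Equiv.coe_fn_mk]
  have hs₁w : (pullback.fst y f₁ ≫ t) ≫ y' = pullback.snd y f₁ ≫ f₁ := by
    rw [Category.assoc, ht]; exact pullback.condition
  have hnat := hφ y y' t ht (pullback.fst y f₁) (pullback.snd y f₁)
    (IsPullback.of_hasPullback y f₁) (pullback.fst y' f₁) (pullback.snd y' f₁)
    (IsPullback.of_hasPullback y' f₁)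
    (pullback.lift (pullback.fst y f₁ ≫ t) (pullback.snd y f₁) hs₁w)
    (pullback.lift_fst _ _ _) (pullback.lift_snd _ _ _) (u' ≫ ι)
    (memι ⟨u', hu'⟩)
  have hassoc : ∀ (p : ((t ≫ u') ≫ ι) ≫ pf' = y),
      (⟨(t ≫ u') ≫ ι, p⟩ : {x : A ⟶ Pi' // x ≫ pf' = y})
        = ⟨t ≫ u' ≫ ι, by rw [← Category.assoc t u' ι]; exact p⟩ :=
    fun p => Subtype.ext (Category.assoc _ _ _)
  simp only [hassoc]
  rw [hnat]
  have hjs : pullback.lift a (q ≫ lf) (pfj y a q hQ) ≫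
      pullback.lift (pullback.fst y f₁ ≫ t) (pullback.snd y f₁) hs₁w =
      s ≫ pullback.lift a' (q' ≫ lf) (pfj y' a' q' hQ') := by
    apply pullback.hom_ext
    · rw [Category.assoc, pullback.lift_fst, ← Category.assoc, pullback.lift_fst,
        Category.assoc, pullback.lift_fst, hs1]
    · rw [Category.assoc, pullback.lift_snd, pullback.lift_snd, Category.assoc,
        pullback.lift_snd, ← Category.assoc, hs2]
  simp only [Category.assoc] at hnat ⊢
  rw [reassoc_of% hjs]

end DMCPaper
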